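/- Let G be a multigraph, let k be a positive integer, and let v be a vertex of G. If the degree of v is less than 2k and for any two distinct neighbors x and y of v the maximum number of pairwise edge-disjoint paths between x and y in G is at least k, then v is not a cut-vertex of G. -/

import Mathlib

/-- A finite loopless multigraph: an edge type `E` together with an assignment of a
pair of distinct endpoints to each edge. -/
structure Multigraph (V : Type*) (E : Type*) where
  ends : E → Sym2 V
  loopless : ∀ e : E, ¬ (ends e).IsDiag

namespace Multigraph

variable {V E : Type*}

/-- Walks in a multigraph. -/
inductive Walk (G : Multigraph V E) : V → V → Type _ where
  | nil (v : V) : Walk G v v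
  | cons {u v w : V} (e : E) (he : G.ends e = s(u, v)) (p : Walk G v w) : Walk G u w

namespace Walk

variable {G : Multigraph V E}

/-- The list of vertices visited by a walk, in order. -/
def support : {u v : V} → G.Walk u v → List V
  | _, _, .nil v => [v]
  | u, _, .cons _ _ p => u :: p.support

/-- The list of edges traversed by a walk, in order. -/
def edgeList : {u v : V} → G.Walk u v → List E
  | _, _, .nil _ => []
  | _, _, .cons e _ p => e :: p.edgeList

/-- A walk is a path if it visits no vertex twice. -/
def IsPath {u v : V} (p : G.Walk u v) : Prop := p.support.Nodup

end Walk

/-- Two vertices are reachable if there is a walk between them. -/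
def Reachable (G : Multigraph V E) (x y : V) : Prop := Nonempty (G.Walk x y)

/-- A multigraph is connected if it is nonempty and every two vertices are
reachable from each other. -/
def Connected (G : Multigraph V E) : Prop :=
  Nonempty V ∧ ∀ x y : V, G.Reachable x y

/-- `x` is a neighbour of `v`. -/
def Nbr (G : Multigraph V E) (v x : V) : Prop := ∃ e : E, G.ends e = s(v, x)

/-- The degree of `v`: the number of edges incident to `v`. -/
noncomputable def mdeg (G : Multigraph V E) (v : V) : ℕ :=
  {e : E | v ∈ G.ends e}.ncard

/-- `p_G(x,y) ≥ k`: there are at least `k` pairwise edge-disjoint paths between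
`x` and `y`. -/
def EdgeDisjointPaths (G : Multigraph V E) (x y : V) (k : ℕ) : Prop :=
  ∃ P : Fin k → G.Walk x y, (∀ i, (P i).IsPath) ∧
    ∀ i j, i ≠ j → List.Disjoint (P i).edgeList (P j).edgeList

/-- `v` is a cut-vertex of the connected multigraph `G`: deleting `v` (together with
its incident edges) disconnects `G`, i.e. some two vertices distinct from `v` are
joined by no walk avoiding `v`. -/
def IsCutVertex (G : Multigraph V E) (v : V) : Prop :=
  G.Connected ∧
    ¬ ∀ x y : V, x ≠ v → y ≠ v → ∃ p : G.Walk x y, v ∉ p.support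

end Multigraph

namespace Multigraph

variable {V E : Type*} {G : Multigraph V E}

namespace Walk

/-- Concatenation of walks. -/
def append : {u v w : V} → G.Walk u v → G.Walk v w → G.Walk u w
  | _, _, _, .nil _, q => q
  | _, _, _, .cons e he p, q => .cons e he (p.append q)

lemma start_mem_support : ∀ {u v : V} (p : G.Walk u v), u ∈ p.support
  | _, _, .nil u => by simp [support]
  | _, _, .cons e he p => by simp [support]

lemma mem_support_append : ∀ {u v w z : V} (p : G.Walk u v) (q : G.Walk v w),
    z ∈ (p.append q).support → z ∈ p.support ∨ z ∈ q.support
  | _, _, _, _, .nil _, q, h => Or.inr h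
  | _, _, _, _, .cons e he p, q, h => by
      simp only [append, support, List.mem_cons] at h ⊢
      rcases h with h | h
      · exact Or.inl (Or.inl h)
      · rcases mem_support_append p q h with h | h
        · exact Or.inl (Or.inr h)
        · exact Or.inr h

/-- Reversal of a walk. -/
def reverse : {u v : V} → G.Walk u v → G.Walk v u
  | _, _, .nil u => .nil u
  | u, _, .cons e he p => p.reverse.append (.cons e (he.trans (Sym2.eq_swap)) (.nil u))

lemma mem_support_reverse : ∀ {u v z : V} (p : G.Walk u v),
    z ∈ p.reverse.support → z ∈ p.support
  | _, _, _, .nil _, h => h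
  | _, _, z, .cons e he p, h => by
      rcases mem_support_append _ _ h with h | h
      · simp only [support, List.mem_cons]
        exact Or.inr (mem_support_reverse p h)
      · simp only [support, List.mem_cons, List.not_mem_nil, or_false] at h
        rcases h with rfl | rfl
        · simp only [support, List.mem_cons]
          exact Or.inr (start_mem_support p)
        · simp [support]

end Walk

open Walk

/-- From any walk from `x ≠ v` to `v` one can extract a neighbour `a` of `v`
together with a walk from `x` to `a` avoiding `v`. -/
lemma exists_nbr_walk {v : V} : ∀ {x t : V} (_ : G.Walk x t), t = v → x ≠ v →
    ∃ (a : V) (q : G.Walk x a), G.Nbr v a ∧ v ∉ q.support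
  | _, _, .nil u, ht, hx => absurd (ht ▸ rfl) hx
  | u, t, .cons (v := w) e he p, ht, hx => by
      by_cases hw : w = v
      · subst hw
        refine ⟨u, .nil u, ⟨e, he.trans Sym2.eq_swap⟩, ?_⟩
        simp [Walk.support, Ne.symm hx]
      · obtain ⟨a, q, hna, hvq⟩ := exists_nbr_walk p ht hw
        refine ⟨a, .cons e he q, hna, ?_⟩
        simp only [Walk.support, List.mem_cons, not_or]
        exact ⟨Ne.symm hx, hvq⟩

/-- A nodup walk whose interior contains `v` uses two distinct edges incident
to `v`. -/
lemma two_edges {v : V} : ∀ {u b : V} (p : G.Walk u b), p.support.Nodup →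
    v ∈ p.support → v ≠ u → v ≠ b →
    ∃ e ∈ p.edgeList, ∃ f ∈ p.edgeList, e ≠ f ∧ v ∈ G.ends e ∧ v ∈ G.ends f
  | _, _, .nil u, _, hv, _, hvb => by
      simp only [Walk.support, List.mem_singleton] at hv
      exact absurd hv hvb
  | u, b, .cons (v := w) e he p, hnd, hv, hvu, hvb => by
      simp only [Walk.support, List.nodup_cons] at hnd
      obtain ⟨hus, hnd'⟩ := hnd
      simp only [Walk.support, List.mem_cons] at hv
      rcases hv with hv | hv
      · exact absurd hv hvu
      · by_cases hw : v = w
        · subst hw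
          cases p with
          | nil => exact absurd rfl hvb
          | @cons _ w' _ f hf p'' =>
              refine ⟨e, by simp [Walk.edgeList], f, by simp [Walk.edgeList], ?_, ?_, ?_⟩
              · rintro rfl
                rw [he] at hf
                rcases Sym2.eq_iff.mp hf with ⟨h1, -⟩ | ⟨h1, -⟩
                · exact hvu h1.symm
                · subst h1
                  refine hus ?_
                  simp only [Walk.support, List.mem_cons]
                  exact Or.inr (start_mem_support p'')
              · rw [he]; simp
              · rw [hf]; simp
        · obtain ⟨e', he', f', hf', hef, hve, hvf⟩ :=
            two_edges p hnd' hv hw hvb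
          exact ⟨e', by simp [Walk.edgeList, he'], f', by simp [Walk.edgeList, hf'],
            hef, hve, hvf⟩

end Multigraph

/-- Let `G` be a multigraph and `k` a positive integer. If `v` is a vertex of degree
less than `2k` such that `p_G(x,y) ≥ k` for any two distinct neighbours `x`, `y` of
`v`, then `v` is not a cut-vertex. -/
theorem not_cut_vertex {V E : Type*} [Finite V] [Finite E]
    (G : Multigraph V E) (k : ℕ) (hk : 0 < k) (v : V)
    (hdeg : G.mdeg v < 2 * k)
    (hpaths : ∀ x y : V, G.Nbr v x → G.Nbr v y → x ≠ y →
      G.EdgeDisjointPaths x y k) :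
    ¬ G.IsCutVertex v := by
  classical
  rintro ⟨⟨-, hconn⟩, hcut⟩
  push_neg at hcut
  obtain ⟨x, y, hxv, hyv, hxy⟩ := hcut
  obtain ⟨px⟩ := hconn x v
  obtain ⟨py⟩ := hconn y v
  obtain ⟨a, qx, hna, hvqx⟩ := Multigraph.exists_nbr_walk px rfl hxv
  obtain ⟨b, qy, hnb, hvqy⟩ := Multigraph.exists_nbr_walk py rfl hyv
  have hvqy' : v ∉ qy.reverse.support := fun h => hvqy (qy.mem_support_reverse h)
  -- every walk from a to b passes through v
  have hab : ∀ r : G.Walk a b, v ∈ r.support := by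
    intro r
    by_contra hv
    have := hxy (qx.append (r.append qy.reverse))
    rcases Multigraph.Walk.mem_support_append _ _ this with h | h
    · exact hvqx h
    · rcases Multigraph.Walk.mem_support_append _ _ h with h | h
      · exact hv h
      · exact hvqy' h
  have hne_ab : a ≠ b := by
    rintro rfl
    have := hxy (qx.append qy.reverse)
    rcases Multigraph.Walk.mem_support_append _ _ this with h | h
    · exact hvqx h
    · exact hvqy' h
  have hva : v ≠ a := by
    rintro rfl
    obtain ⟨e, he⟩ := hna
    exact G.loopless e (by rw [he]; exact Sym2.mk_isDiag_iff.mpr rfl)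
  have hvb : v ≠ b := by
    rintro rfl
    obtain ⟨e, he⟩ := hnb
    exact G.loopless e (by rw [he]; exact Sym2.mk_isDiag_iff.mpr rfl)
  obtain ⟨P, hP, hdisj⟩ := hpaths a b hna hnb hne_ab
  choose e he f hf hef hve hvf using fun i =>
    Multigraph.two_edges (P i) (hP i) (hab (P i)) hva hvb
  -- build 2k distinct edges incident to v
  set g : Fin k × Bool → E := fun p => bif p.2 then f p.1 else e p.1 with hg
  have hmem : ∀ p : Fin k × Bool, g p ∈ (P p.1).edgeList := by
    rintro ⟨i, (_ | _)⟩ <;> simp [hg, he, hf]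
  have hinj : Function.Injective g := by
    rintro ⟨i, ci⟩ ⟨j, cj⟩ hgij
    by_cases hij : i = j
    · subst hij
      cases ci <;> cases cj <;> simp_all [hg]
      · exact hef i hgij.symm
    · exact absurd (hmem (j, cj)) <| by
        have := hdisj i j (by simpa using hij)
        rw [← hgij]
        exact fun h => this (hmem (i, ci)) h
  have hsub : Set.range g ⊆ {e : E | v ∈ G.ends e} := by
    rintro _ ⟨⟨i, (_ | _)⟩, rfl⟩
    · exact hve i
    · exact hvf i
  have hcard : (Set.range g).ncard = 2 * k := by
    rw [← Nat.card_coe_set_eq, Nat.card_range_of_injective hinj]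
    simp [Nat.card_eq_fintype_card, Nat.mul_comm]
  have : 2 * k ≤ G.mdeg v := by
    rw [← hcard]
    exact Set.ncard_le_ncard hsub (Set.toFinite _)
  omega
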